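/- arXiv:2303.13267 — 3 statements merged into one kernel-verified Lean document; each statement's English description precedes it below -/
import Mathlib

section
/- Every finite 2-degenerate simple graph is near-bipartite: its vertex set can be partitioned into an independent set and a set inducing an acyclic subgraph (a forest). -/
open Classical

/-- Removability of a set of remaining vertices by legal `Delete`/`DeleteSave` operations. -/
inductive SimpleGraph.WDRem {V : Type*} (G : SimpleGraph V) : Finset V → (V → ℤ) → Prop
  | empty (f : V → ℤ) : SimpleGraph.WDRem G ∅ f
  | delete (S : Finset V) (f : V → ℤ) (u : V) (hu : u ∈ S)
      (hleg : ∀ v ∈ S.erase u, 0 ≤ f v - (if G.Adj u v then 1 else 0))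
      (h : SimpleGraph.WDRem G (S.erase u) (fun v => f v - (if G.Adj u v then 1 else 0))) :
      SimpleGraph.WDRem G S f
  | deleteSave (S : Finset V) (f : V → ℤ) (u w : V) (hu : u ∈ S) (hw : w ∈ S)
      (hadj : G.Adj u w) (hsave : f w < f u)
      (hleg : ∀ v ∈ S.erase u, 0 ≤ f v - (if G.Adj u v ∧ v ≠ w then 1 else 0))
      (h : SimpleGraph.WDRem G (S.erase u)
        (fun v => f v - (if G.Adj u v ∧ v ≠ w then 1 else 0))) :
      SimpleGraph.WDRem G S f

/-- Removability by legal `Delete` operations only. -/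
inductive SimpleGraph.DelRem {V : Type*} (G : SimpleGraph V) : Finset V → (V → ℤ) → Prop
  | empty (f : V → ℤ) : SimpleGraph.DelRem G ∅ f
  | delete (S : Finset V) (f : V → ℤ) (u : V) (hu : u ∈ S)
      (hleg : ∀ v ∈ S.erase u, 0 ≤ f v - (if G.Adj u v then 1 else 0))
      (h : SimpleGraph.DelRem G (S.erase u) (fun v => f v - (if G.Adj u v then 1 else 0))) :
      SimpleGraph.DelRem G S f

/-- `G` is weakly `f`-degenerate. -/
def SimpleGraph.WeaklyDeg {V : Type*} [Fintype V] (G : SimpleGraph V) (f : V → ℤ) : Prop :=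
  G.WDRem Finset.univ f

/-- The weak degeneracy `wd(G)`. -/
noncomputable def SimpleGraph.wdeg {V : Type*} [Fintype V] (G : SimpleGraph V) : ℕ :=
  sInf {d : ℕ | G.WeaklyDeg fun _ => (d : ℤ)}

section AuxNB

variable {V : Type*}

/-- `G` has no cycle all of whose vertices lie in `s`. -/
private def AcycWithin (G : SimpleGraph V) (s : Set V) : Prop :=
  ∀ ⦃x : V⦄ (c : G.Walk x x), c.IsCycle → ¬ (∀ y ∈ c.support, y ∈ s)

private lemma acycWithin_induce (G : SimpleGraph V) (s : Set V) (h : AcycWithin G s) :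
    (G.induce s).IsAcyclic := by
  intro x c hc
  refine h (c.map (SimpleGraph.Embedding.induce s).toHom)
    (hc.map Subtype.val_injective) ?_
  intro y hy
  rw [SimpleGraph.Walk.support_map] at hy
  obtain ⟨z, _, rfl⟩ := List.mem_map.mp hy
  exact z.2

private lemma acycWithin_empty (G : SimpleGraph V) : AcycWithin G (∅ : Set V) := by
  intro x c _ hsupp
  exact (hsupp x c.start_mem_support)

private lemma acycWithin_insert {G : SimpleGraph V} {s : Set V} {v : V}
    (h1 : ∀ a ∈ s, ∀ b ∈ s, G.Adj v a → G.Adj v b → a = b)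
    (hs : AcycWithin G s) : AcycWithin G (insert v s) := by
  intro x c hc hsupp
  by_cases hv : v ∈ c.support
  · -- rotate the cycle to start at v
    have hc' := hc.rotate hv
    set c' := c.rotate v hv with hc'def
    have hsupp' : ∀ y ∈ c'.support, y ∈ insert v s := by
      intro y hy
      rw [c'.support_eq_cons, List.mem_cons] at hy
      rcases hy with rfl | hy
      · exact Set.mem_insert _ _
      · have : y ∈ c.support.tail := ((SimpleGraph.Walk.support_rotate c v hv).mem_iff).mp hy
        exact hsupp y (by rw [c.support_eq_cons]; exact List.mem_cons_of_mem _ this)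
    have hnn : ¬ c'.Nil := hc'.not_nil
    obtain ⟨a, hadj, q, hq⟩ := SimpleGraph.Walk.not_nil_iff.mp hnn
    rw [hq] at hc' hsupp'
    -- a is the first neighbor of v on the cycle
    have ha_s : a ∈ s := by
      have : a ∈ insert v s := hsupp' a (by simp [q.start_mem_support])
      exact this.resolve_left hadj.ne'
    -- the last dart of q gives the second neighbor b
    have hlen : 3 ≤ q.length + 1 := by simpa using hc'.three_le_length
    have hqd : q.darts ≠ [] := by
      intro h
      have := q.length_darts
      rw [h] at this
      simp at this
      omega
    set d := q.darts.getLast hqd with hd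
    have hdmem : d ∈ q.darts := List.getLast_mem hqd
    have hdsnd : d.snd = v := by rw [hd, q.getLast_darts_eq_lastDart hqd]; rfl
    have hbadj : G.Adj v d.fst := by
      have := d.adj
      rw [hdsnd] at this
      exact this.symm
    have hb_s : d.fst ∈ s := by
      have hmem : d.fst ∈ q.support := SimpleGraph.Walk.dart_fst_mem_support_of_mem_darts _ hdmem
      have : d.fst ∈ insert v s := hsupp' d.fst (by simp [hmem])
      exact this.resolve_left hbadj.ne'
    have hab : a = d.fst := h1 a ha_s d.fst hb_s hadj hbadj
    -- but then the edge s(v,a) appears twice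
    have hnodup : (SimpleGraph.Walk.cons hadj q).edges.Nodup := hc'.edges_nodup
    rw [SimpleGraph.Walk.edges_cons, List.nodup_cons] at hnodup
    apply hnodup.1
    have hmem : d.edge ∈ q.edges := List.mem_map_of_mem hdmem
    have hedge : d.edge = s(v, a) := by
      rw [show d.edge = s(d.fst, d.snd) from rfl, hdsnd, ← hab]
      exact Sym2.eq_swap
    rwa [hedge] at hmem
  · exact hs c hc fun y hy => (hsupp y hy).resolve_left (fun h => hv (h ▸ hy))

private lemma main_induction [Fintype V] [DecidableEq V] (G : SimpleGraph V)
    (hdeg : ∀ S : Finset V, S.Nonempty → ∃ v ∈ S, (S.filter fun u => G.Adj v u).card ≤ 2) :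
    ∀ S : Finset V, ∃ I : Finset V, I ⊆ S ∧ (∀ u ∈ I, ∀ v ∈ I, ¬ G.Adj u v) ∧
      AcycWithin G (↑(S \ I) : Set V) := by
  intro S
  induction S using Finset.strongInduction with
  | _ S ih =>
    rcases S.eq_empty_or_nonempty with rfl | hS
    · exact ⟨∅, le_rfl, by simp, by simpa using acycWithin_empty G⟩
    obtain ⟨v, hvS, hdv⟩ := hdeg S hS
    obtain ⟨I, hIsub, hind, hacyc⟩ := ih (S.erase v) (Finset.erase_ssubset hvS)
    by_cases hA : ∀ a ∈ I, ¬ G.Adj v a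
    · refine ⟨insert v I, Finset.insert_subset hvS (hIsub.trans (Finset.erase_subset _ _)), ?_, ?_⟩
      · intro u hu w hw hadj
        rcases Finset.mem_insert.mp hu with hu1 | hu1
        · rcases Finset.mem_insert.mp hw with hw1 | hw1
          · subst hu1; subst hw1; exact G.irrefl hadj
          · subst hu1; exact hA w hw1 hadj
        · rcases Finset.mem_insert.mp hw with hw1 | hw1
          · subst hw1; exact hA u hu1 hadj.symm
          · exact hind u hu1 w hw1 hadj
      · have hset : (↑(S \ insert v I) : Set V) = ↑(S.erase v \ I) := by
          ext x
          simp only [Finset.coe_sdiff, Set.mem_diff, Finset.mem_coe, Finset.mem_insert,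
            Finset.mem_erase, Finset.coe_erase, Set.mem_diff, Set.mem_singleton_iff]
          tauto
        rw [hset]; exact hacyc
    · push_neg at hA
      obtain ⟨w0, hw0I, hw0adj⟩ := hA
      refine ⟨I, hIsub.trans (Finset.erase_subset _ _), hind, ?_⟩
      have hvnI : v ∉ I := fun h => (Finset.mem_erase.mp (hIsub h)).1 rfl
      have hset : (↑(S \ I) : Set V) = insert v (↑(S.erase v \ I) : Set V) := by
        ext x
        simp only [Finset.coe_sdiff, Set.mem_diff, Finset.mem_coe, Set.mem_insert_iff,
          Finset.coe_erase, Set.mem_singleton_iff]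
        constructor
        · rintro ⟨hxS, hxI⟩
          by_cases hxv : x = v
          · exact Or.inl hxv
          · exact Or.inr ⟨⟨hxS, hxv⟩, hxI⟩
        · rintro (rfl | ⟨⟨hxS, _⟩, hxI⟩)
          · exact ⟨hvS, hvnI⟩
          · exact ⟨hxS, hxI⟩
      rw [hset]
      refine acycWithin_insert ?_ hacyc
      intro a ha b hb hva hvb
      rw [Finset.mem_coe, Finset.mem_sdiff, Finset.mem_erase] at ha hb
      by_contra hab
      have hw0S : w0 ∈ S := (Finset.mem_erase.mp (hIsub hw0I)).2
      have hsub : ({a, b, w0} : Finset V) ⊆ S.filter (fun u => G.Adj v u) := by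
        intro x hx
        rw [Finset.mem_filter]
        rcases Finset.mem_insert.mp hx with rfl | hx
        · exact ⟨ha.1.2, hva⟩
        rcases Finset.mem_insert.mp hx with rfl | hx
        · exact ⟨hb.1.2, hvb⟩
        · rw [Finset.mem_singleton] at hx; subst hx; exact ⟨hw0S, hw0adj⟩
      have hcard : ({a, b, w0} : Finset V).card = 3 := by
        rw [Finset.card_insert_of_notMem, Finset.card_insert_of_notMem, Finset.card_singleton]
        · simp only [Finset.mem_singleton]
          intro h; subst h; exact hb.2 hw0I
        · simp only [Finset.mem_insert, Finset.mem_singleton]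
          rintro (rfl | rfl)
          · exact hab rfl
          · exact ha.2 hw0I
      have hle := Finset.card_le_card hsub
      rw [hcard] at hle
      omega

end AuxNB

theorem two_degenerate_near_bipartite {V : Type*} [Fintype V] (G : SimpleGraph V)
    (hdeg : ∀ S : Finset V, S.Nonempty → ∃ v ∈ S, (S.filter fun u => G.Adj v u).card ≤ 2) :
    ∃ I : Set V, (∀ u ∈ I, ∀ v ∈ I, ¬ G.Adj u v) ∧ (G.induce (Iᶜ : Set V)).IsAcyclic := by
  classical
  obtain ⟨I, -, hind, hacyc⟩ := main_induction G hdeg Finset.univ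
  refine ⟨↑I, fun u hu w hw => hind u hu w hw, ?_⟩
  have hset : ((↑I : Set V)ᶜ) = (↑(Finset.univ \ I) : Set V) := by
    ext x; simp
  rw [hset]
  exact acycWithin_induce G _ hacyc
end

section
/- For every finite simple graph G, the chromatic number satisfies χ(G) ≤ wd(G) + 1, where wd(G) is the weak degeneracy of G. -/
open Classical

private lemma wdRem_of_big {V : Type*} (G : SimpleGraph V) :
    ∀ (S : Finset V) (f : V → ℤ), (∀ v ∈ S, (S.card : ℤ) - 1 ≤ f v) → G.WDRem S f := by
  classical
  intro S
  induction S using Finset.strongInduction with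
  | _ S ih =>
    intro f hf
    rcases S.eq_empty_or_nonempty with rfl | ⟨u, hu⟩
    · exact SimpleGraph.WDRem.empty f
    · have hcard : (S.erase u).card = S.card - 1 := Finset.card_erase_of_mem hu
      have hS1 : 1 ≤ S.card := Finset.card_pos.mpr ⟨u, hu⟩
      have hleg : ∀ v ∈ S.erase u, 0 ≤ f v - (if G.Adj u v then 1 else 0) := by
        intro v hv
        have h1 : 1 ≤ (S.erase u).card := Finset.card_pos.mpr ⟨v, hv⟩
        have := hf v (Finset.mem_of_mem_erase hv)
        have h2 : 2 ≤ S.card := by omega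
        split <;> push_cast at * <;> omega
      refine SimpleGraph.WDRem.delete S f u hu hleg ?_
      refine ih (S.erase u) (Finset.erase_ssubset hu) _ ?_
      intro v hv
      have := hf v (Finset.mem_of_mem_erase hv)
      rw [hcard]
      split <;> push_cast [hS1] <;> omega

private lemma wdeg_set_nonempty {V : Type*} [Fintype V] (G : SimpleGraph V) :
    {d : ℕ | G.WeaklyDeg fun _ => (d : ℤ)}.Nonempty := by
  refine ⟨Fintype.card V, ?_⟩
  refine wdRem_of_big G Finset.univ _ ?_
  intro v _
  simp only [Finset.card_univ]
  omega

private lemma wdRem_colorable {V : Type*} (G : SimpleGraph V) {S : Finset V} {f : V → ℤ}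
    (h : G.WDRem S f) :
    ∀ (_ : ∀ v ∈ S, 0 ≤ f v) (L : V → Finset ℕ),
      (∀ v ∈ S, f v + 1 ≤ (L v).card) →
      ∃ c : V → ℕ, (∀ v ∈ S, c v ∈ L v) ∧
        ∀ x ∈ S, ∀ y ∈ S, G.Adj x y → c x ≠ c y := by
  classical
  induction h with
  | empty f =>
    intro _ L _
    exact ⟨fun _ => 0, by simp, by simp⟩
  | delete S f u hu hleg h ih =>
    intro hnn L hL
    -- pick a color for u
    have hLu : (L u).Nonempty := by
      rw [← Finset.card_pos]
      have := hL u hu; have := hnn u hu; omega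
    obtain ⟨α, hα⟩ := hLu
    set L' : V → Finset ℕ := fun v => if G.Adj u v then (L v).erase α else L v with hL'def
    have hL'sub : ∀ v, L' v ⊆ L v := by
      intro v; simp only [hL'def]; split
      · exact Finset.erase_subset _ _
      · exact subset_rfl
    have hnn' : ∀ v ∈ S.erase u, 0 ≤ f v - (if G.Adj u v then 1 else 0) := hleg
    have hL' : ∀ v ∈ S.erase u, f v - (if G.Adj u v then 1 else 0) + 1 ≤ (L' v).card := by
      intro v hv
      have h1 := hL v (Finset.mem_of_mem_erase hv)
      simp only [hL'def]
      by_cases hadj : G.Adj u v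
      · simp only [hadj, if_true]
        have h2 : (L v).card - 1 ≤ ((L v).erase α).card := Finset.pred_card_le_card_erase
        have h3 := hleg v hv
        simp only [hadj, if_true] at h3 ⊢
        push_cast at *
        omega
      · simp [hadj] at h1 ⊢; omega
    obtain ⟨c, hc1, hc2⟩ := ih hnn' L' hL'
    refine ⟨Function.update c u α, ?_, ?_⟩
    · intro v hv
      by_cases hvu : v = u
      · subst hvu; simpa using hα
      · rw [Function.update_of_ne hvu]
        exact hL'sub v (hc1 v (Finset.mem_erase.mpr ⟨hvu, hv⟩))
    · intro x hx y hy hadj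
      by_cases hxu : x = u
      · have hadj' : G.Adj u y := hxu ▸ hadj
        have hyu : y ≠ u := fun hh => G.irrefl (hh ▸ hadj')
        rw [hxu, Function.update_self, Function.update_of_ne hyu]
        have := hc1 y (Finset.mem_erase.mpr ⟨hyu, hy⟩)
        simp only [hL'def, hadj', if_true] at this
        exact fun hh => (Finset.ne_of_mem_erase this) hh.symm
      · by_cases hyu : y = u
        · have hadj' : G.Adj x u := hyu ▸ hadj
          rw [hyu, Function.update_self, Function.update_of_ne hxu]
          have := hc1 x (Finset.mem_erase.mpr ⟨hxu, hx⟩)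
          simp only [hL'def, hadj'.symm, if_true] at this
          exact Finset.ne_of_mem_erase this
        · rw [Function.update_of_ne hxu, Function.update_of_ne hyu]
          exact hc2 x (Finset.mem_erase.mpr ⟨hxu, hx⟩) y (Finset.mem_erase.mpr ⟨hyu, hy⟩) hadj
  | deleteSave S f u w hu hw hadjuw hsave hleg h ih =>
    intro hnn L hL
    have hfw0 : 0 ≤ f w := hnn w hw
    have hfu0 : 0 ≤ f u := hnn u hu
    -- shrink L w to exact size
    have hLwcard : (f w).toNat + 1 ≤ (L w).card := by
      have := hL w hw; omega
    obtain ⟨Lw', hLw'sub, hLw'card⟩ := Finset.exists_subset_card_eq hLwcard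
    -- pick α ∈ L u \ Lw'
    have hnotsub : ¬ L u ⊆ Lw' := by
      intro hsub
      have h1 := Finset.card_le_card hsub
      have h2 := hL u hu
      omega
    obtain ⟨α, hαu, hαw⟩ := Finset.not_subset.mp hnotsub
    set L' : V → Finset ℕ := fun v =>
      if v = w then Lw' else if G.Adj u v then (L v).erase α else L v with hL'def
    have hL'sub : ∀ v, L' v ⊆ L v := by
      intro v; simp only [hL'def]
      split
      · next hh => subst hh; exact hLw'sub
      · split
        · exact Finset.erase_subset _ _
        · exact subset_rfl
    have hnn' := hleg
    have hL' : ∀ v ∈ S.erase u,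
        f v - (if G.Adj u v ∧ v ≠ w then 1 else 0) + 1 ≤ (L' v).card := by
      intro v hv
      have h1 := hL v (Finset.mem_of_mem_erase hv)
      simp only [hL'def]
      by_cases hvw : v = w
      · subst hvw
        simp only [if_true, hLw'card]
        have : (if G.Adj u v ∧ v ≠ v then (1:ℤ) else 0) = 0 := by simp
        omega
      · simp only [hvw, if_false]
        by_cases hadj : G.Adj u v
        · simp only [hadj, if_true, hvw, ne_eq, not_false_eq_true, and_true]
          have h2 : (L v).card - 1 ≤ ((L v).erase α).card := Finset.pred_card_le_card_erase
          have h3 := hleg v hv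
          simp only [hadj, hvw, ne_eq, not_false_eq_true, and_true, if_true] at h3
          push_cast at *
          omega
        · simp [hadj] at h1 ⊢; omega
    obtain ⟨c, hc1, hc2⟩ := ih hnn' L' hL'
    refine ⟨Function.update c u α, ?_, ?_⟩
    · intro v hv
      by_cases hvu : v = u
      · subst hvu; simpa using hαu
      · rw [Function.update_of_ne hvu]
        exact hL'sub v (hc1 v (Finset.mem_erase.mpr ⟨hvu, hv⟩))
    · intro x hx y hy hadj
      have key : ∀ z ∈ S.erase u, G.Adj u z → c z ≠ α := by
        intro z hz hadjz
        have hmem := hc1 z hz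
        simp only [hL'def] at hmem
        by_cases hzw : z = w
        · subst hzw; simp only [if_true] at hmem
          exact fun hh => hαw (hh ▸ hmem)
        · simp only [hzw, if_false, hadjz, if_true] at hmem
          exact Finset.ne_of_mem_erase hmem
      by_cases hxu : x = u
      · have hadj' : G.Adj u y := hxu ▸ hadj
        have hyu : y ≠ u := fun hh => G.irrefl (hh ▸ hadj')
        rw [hxu, Function.update_self, Function.update_of_ne hyu]
        exact fun hh => key y (Finset.mem_erase.mpr ⟨hyu, hy⟩) hadj' hh.symm
      · by_cases hyu : y = u
        · have hadj' : G.Adj x u := hyu ▸ hadj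
          rw [hyu, Function.update_self, Function.update_of_ne hxu]
          exact key x (Finset.mem_erase.mpr ⟨hxu, hx⟩) hadj'.symm
        · rw [Function.update_of_ne hxu, Function.update_of_ne hyu]
          exact hc2 x (Finset.mem_erase.mpr ⟨hxu, hx⟩) y (Finset.mem_erase.mpr ⟨hyu, hy⟩) hadj

theorem chromaticNumber_le_wdeg_add_one {V : Type*} [Fintype V] (G : SimpleGraph V) :
    G.chromaticNumber ≤ (G.wdeg : ℕ∞) + 1 := by
  classical
  have hmem : G.wdeg ∈ {d : ℕ | G.WeaklyDeg fun _ => (d : ℤ)} :=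
    Nat.sInf_mem (wdeg_set_nonempty G)
  set d := G.wdeg with hd
  have hwd : G.WDRem Finset.univ (fun _ => (d : ℤ)) := hmem
  obtain ⟨c, hc1, hc2⟩ := wdRem_colorable G hwd (by intro v _; positivity)
      (fun _ => Finset.range (d + 1))
      (by intro v _; rw [Finset.card_range]; push_cast; omega)
  have hcol : G.Colorable (d + 1) := by
    rw [SimpleGraph.colorable_iff_exists_bdd_nat_coloring]
    refine ⟨SimpleGraph.Coloring.mk c ?_, ?_⟩
    · intro x y hxy
      exact hc2 x (Finset.mem_univ x) y (Finset.mem_univ y) hxy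
    · intro v
      have := hc1 v (Finset.mem_univ v)
      exact Finset.mem_range.mp this
  have := hcol.chromaticNumber_le
  calc G.chromaticNumber ≤ ((d + 1 : ℕ) : ℕ∞) := this
    _ = (d : ℕ∞) + 1 := by push_cast; rfl
end

section
/- If G is a minimal graph of weak degeneracy d (meaning wd(G) = d and every proper subgraph H of G satisfies wd(H) < d), then every vertex of G has degree at least d. -/
open Classical

section Aux
variable {V : Type*} {G : SimpleGraph V}

theorem wdrem_mono {S : Finset V} {f : V → ℤ} (h : G.WDRem S f) :
    ∀ g : V → ℤ, (∀ v ∈ S, f v ≤ g v) → G.WDRem S g := by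
  induction h with
  | empty f => exact fun g _ => .empty g
  | delete S f u hu hleg h ih =>
    intro g hfg
    refine .delete S g u hu (fun v hv => ?_) (ih _ fun v hv => ?_) <;>
    · try dsimp only
      have h1 := hleg v hv
      have h2 := hfg v (Finset.mem_of_mem_erase hv)
      linarith
  | deleteSave S f u w hu hw hadj hsave hleg h ih =>
    intro g hfg
    have hwu : w ∈ S.erase u :=
      Finset.mem_erase.2 ⟨fun hh => G.ne_of_adj hadj hh.symm, hw⟩
    by_cases hgw : g w < g u
    · refine .deleteSave S g u w hu hw hadj hgw (fun v hv => ?_) (ih _ fun v hv => ?_) <;>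
      · try dsimp only
        have h1 := hleg v hv
        have h2 := hfg v (Finset.mem_of_mem_erase hv)
        linarith
    · push_neg at hgw
      have hfw : (0:ℤ) ≤ f w := by
        have := hleg w hwu; simpa using this
      have key : ∀ v ∈ S.erase u,
          0 ≤ g v - (if G.Adj u v then 1 else 0) ∧
          f v - (if G.Adj u v ∧ v ≠ w then 1 else 0) ≤ g v - (if G.Adj u v then 1 else 0) := by
        intro v hv
        have h1 := hleg v hv
        have h2 := hfg v (Finset.mem_of_mem_erase hv)
        by_cases hvw : v = w
        · subst hvw
          have h3 := hfg u hu
          simp only [hadj, if_pos, and_false, ne_eq, not_true_eq_false, if_false] at *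
          constructor <;> linarith
        · have heq : (if G.Adj u v ∧ v ≠ w then (1:ℤ) else 0) = if G.Adj u v then 1 else 0 := by
            simp [hvw]
          rw [heq] at h1 ⊢
          constructor <;> linarith
      exact .delete S g u hu (fun v hv => (key v hv).1) (ih _ fun v hv => (key v hv).2)

theorem wdrem_of_card (G : SimpleGraph V) :
    ∀ (n : ℕ) (S : Finset V) (f : V → ℤ), S.card = n →
      (∀ v ∈ S, (n : ℤ) - 1 ≤ f v) → G.WDRem S f := by
  intro n
  induction n with
  | zero =>
    intro S f hS _
    rw [Finset.card_eq_zero] at hS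
    subst hS
    exact .empty f
  | succ n ih =>
    intro S f hS hf
    obtain ⟨u, hu⟩ := Finset.card_pos.1 (by omega : 0 < S.card)
    have hcard : (S.erase u).card = n := by
      rw [Finset.card_erase_of_mem hu, hS]; omega
    refine .delete S f u hu (fun v hv => ?_) (ih _ _ hcard fun v hv => ?_)
    · have h1 := hf v (Finset.mem_of_mem_erase hv)
      have hn : 1 ≤ n := by
        have h2 := Finset.card_pos.2 ⟨v, hv⟩
        omega
      have hn' : (1:ℤ) ≤ n := by exact_mod_cast hn
      split <;> push_cast at h1 ⊢ <;> linarith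
    · have h1 := hf v (Finset.mem_of_mem_erase hv)
      split <;> push_cast at h1 ⊢ <;> linarith

theorem wdrem_map {V' : Type*} {G' : SimpleGraph V'} {φ : V' → V}
    (hinj : Function.Injective φ)
    (hadj : ∀ a b, G'.Adj a b ↔ G.Adj (φ a) (φ b))
    {S : Finset V'} {f : V' → ℤ} (h : G'.WDRem S f) :
    ∀ g : V → ℤ, (∀ a ∈ S, g (φ a) = f a) → G.WDRem (S.image φ) g := by
  induction h with
  | empty f => intro g _; simpa using SimpleGraph.WDRem.empty (G := G) g
  | delete S f u hu hleg h ih =>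
    intro g hg
    have himg : (S.image φ).erase (φ u) = (S.erase u).image φ := by
      rw [Finset.image_erase hinj]
    refine .delete (S.image φ) g (φ u) (Finset.mem_image_of_mem φ hu) ?_ ?_
    · intro v hv
      rw [himg] at hv
      obtain ⟨a, ha, rfl⟩ := Finset.mem_image.1 hv
      rw [hg a (Finset.mem_of_mem_erase ha), ← hadj]
      exact hleg a ha
    · rw [himg]
      refine ih _ fun a ha => ?_
      rw [hg a (Finset.mem_of_mem_erase ha), ← hadj]
  | deleteSave S f u w hu hw hadj' hsave hleg h ih =>
    intro g hg
    have himg : (S.image φ).erase (φ u) = (S.erase u).image φ := by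
      rw [Finset.image_erase hinj]
    refine .deleteSave (S.image φ) g (φ u) (φ w) (Finset.mem_image_of_mem φ hu)
      (Finset.mem_image_of_mem φ hw) ((hadj u w).1 hadj') ?_ ?_ ?_
    · rw [hg u hu, hg w hw]; exact hsave
    · intro v hv
      rw [himg] at hv
      obtain ⟨a, ha, rfl⟩ := Finset.mem_image.1 hv
      rw [hg a (Finset.mem_of_mem_erase ha)]
      simpa only [ne_eq, hinj.eq_iff, ← hadj] using hleg a ha
    · rw [himg]
      refine ih _ fun a ha => ?_
      dsimp only
      rw [hg a (Finset.mem_of_mem_erase ha)]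
      simp only [ne_eq, hinj.eq_iff, ← hadj]

theorem count_aux {S : Finset V} {u v : V} (hu : u ∈ S) :
    (((S.erase u).filter (fun x => G.Adj x v)).card : ℤ)
      = ((S.filter (fun x => G.Adj x v)).card : ℤ) - (if G.Adj u v then 1 else 0) ∧
    (if G.Adj u v then (1:ℤ) else 0) ≤ ((S.filter (fun x => G.Adj x v)).card : ℤ) := by
  have hfe : (S.erase u).filter (fun x => G.Adj x v)
      = (S.filter (fun x => G.Adj x v)).erase u := by
    ext x
    simp only [Finset.mem_filter, Finset.mem_erase]
    tauto
  rw [hfe]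
  by_cases hav : G.Adj u v
  · have hmem : u ∈ S.filter (fun x => G.Adj x v) := Finset.mem_filter.2 ⟨hu, hav⟩
    have h1 : 0 < (S.filter (fun x => G.Adj x v)).card := Finset.card_pos.2 ⟨u, hmem⟩
    rw [Finset.card_erase_of_mem hmem, if_pos hav]
    constructor
    · push_cast [Nat.cast_sub h1]
      ring
    · exact_mod_cast h1
  · have hnm : u ∉ S.filter (fun x => G.Adj x v) :=
      fun hc => hav (Finset.mem_filter.1 hc).2
    rw [Finset.erase_eq_of_notMem hnm, if_neg hav]
    refine ⟨by ring, Int.natCast_nonneg _⟩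

theorem wdrem_insert {S : Finset V} {f : V → ℤ} (h : G.WDRem S f) :
    ∀ v ∉ S, ((S.filter (fun x => G.Adj x v)).card : ℤ) ≤ f v → G.WDRem (insert v S) f := by
  induction h with
  | empty f =>
    intro v _ hfv
    refine .delete {v} f v (Finset.mem_singleton_self v) (by simp) ?_
    simpa using SimpleGraph.WDRem.empty (G := G) _
  | delete S f u hu hleg h ih =>
    intro v hv hfv
    have hvu : v ≠ u := fun hh => hv (hh ▸ hu)
    have herase : (insert v S).erase u = insert v (S.erase u) := by
      rw [Finset.erase_insert_of_ne hvu]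
    obtain ⟨hcard, hle⟩ := count_aux (G := G) (v := v) hu
    refine .delete (insert v S) f u (Finset.mem_insert_of_mem hu) ?_ ?_
    · intro x hx
      rw [herase] at hx
      rcases Finset.mem_insert.1 hx with rfl | hx
      · linarith
      · exact hleg x hx
    · rw [herase]
      refine ih v (fun hc => hv (Finset.mem_of_mem_erase hc)) ?_
      dsimp only
      rw [hcard]
      linarith
  | deleteSave S f u w hu hw hadj hsave hleg h ih =>
    intro v hv hfv
    have hvu : v ≠ u := fun hh => hv (hh ▸ hu)
    have hvw : v ≠ w := fun hh => hv (hh ▸ hw)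
    have herase : (insert v S).erase u = insert v (S.erase u) := by
      rw [Finset.erase_insert_of_ne hvu]
    have hite : (if G.Adj u v ∧ v ≠ w then (1:ℤ) else 0) = if G.Adj u v then 1 else 0 := by
      simp [hvw]
    obtain ⟨hcard, hle⟩ := count_aux (G := G) (v := v) hu
    refine .deleteSave (insert v S) f u w (Finset.mem_insert_of_mem hu)
      (Finset.mem_insert_of_mem hw) hadj hsave ?_ ?_
    · intro x hx
      rw [herase] at hx
      rcases Finset.mem_insert.1 hx with rfl | hx
      · rw [hite]
        linarith
      · exact hleg x hx
    · rw [herase]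
      refine ih v (fun hc => hv (Finset.mem_of_mem_erase hc)) ?_
      dsimp only
      rw [hcard, hite]
      linarith

end Aux

theorem minimal_wdeg_minDegree {V : Type*} [Fintype V] (G : SimpleGraph V) (d : ℕ)
    (hwd : G.wdeg = d) (hmin : ∀ H : G.Subgraph, H ≠ ⊤ → H.coe.wdeg < d) :
    ∀ v : V, d ≤ G.degree v := by
  intro v
  by_contra hlt
  push_neg at hlt
  have hd : 1 ≤ d := by omega
  set H : G.Subgraph := (⊤ : G.Subgraph).deleteVerts {v} with hH
  have hne : H ≠ ⊤ := by
    intro hc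
    have hv : v ∈ H.verts := by rw [hc]; trivial
    simp [hH] at hv
  have hHd : H.coe.wdeg < d := hmin H hne
  have hnonempty : {m : ℕ | H.coe.WeaklyDeg fun _ => (m : ℤ)}.Nonempty := by
    refine ⟨Fintype.card H.verts, ?_⟩
    refine wdrem_of_card _ (Fintype.card H.verts) Finset.univ _ (by simp) fun x _ => by linarith
  have hmem : H.coe.WeaklyDeg fun _ => (H.coe.wdeg : ℤ) := Nat.sInf_mem hnonempty
  have hmono : H.coe.WDRem Finset.univ fun _ => (d : ℤ) - 1 := by
    refine wdrem_mono hmem _ fun x _ => ?_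
    have : (H.coe.wdeg : ℤ) ≤ (d : ℤ) - 1 := by push_cast; omega
    linarith
  have hadjiff : ∀ a b : H.verts, H.coe.Adj a b ↔ G.Adj a.1 b.1 := by
    intro a b
    constructor
    · exact fun h => H.adj_sub h
    · intro h
      have ha := a.2
      have hb := b.2
      simp only [hH, SimpleGraph.Subgraph.deleteVerts_verts, SimpleGraph.Subgraph.verts_top,
        Set.mem_diff, Set.mem_singleton_iff] at ha hb
      exact ⟨⟨trivial, ha.2⟩, ⟨trivial, hb.2⟩, h⟩
  have hmap : G.WDRem (Finset.univ.image (Subtype.val : H.verts → V)) fun _ => (d : ℤ) - 1 :=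
    wdrem_map Subtype.val_injective hadjiff hmono _ fun a _ => rfl
  have himg : (Finset.univ.image (Subtype.val : H.verts → V)) = Finset.univ.erase v := by
    ext x
    constructor
    · intro hx
      obtain ⟨a, -, rfl⟩ := Finset.mem_image.1 hx
      have ha := a.2
      simp only [hH, SimpleGraph.Subgraph.deleteVerts_verts, SimpleGraph.Subgraph.verts_top,
        Set.mem_diff, Set.mem_singleton_iff] at ha
      exact Finset.mem_erase.2 ⟨ha.2, Finset.mem_univ _⟩
    · intro hx
      have hxv : x ≠ v := (Finset.mem_erase.1 hx).1
      have hxm : x ∈ H.verts := by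
        simp only [hH, SimpleGraph.Subgraph.deleteVerts_verts, SimpleGraph.Subgraph.verts_top,
          Set.mem_diff, Set.mem_singleton_iff]
        exact ⟨trivial, hxv⟩
      exact Finset.mem_image.2 ⟨⟨x, hxm⟩, Finset.mem_univ _, rfl⟩
  rw [himg] at hmap
  have hcount : (((Finset.univ.erase v).filter (fun x => G.Adj x v)).card : ℤ) ≤ (d : ℤ) - 1 := by
    have hsub : (Finset.univ.erase v).filter (fun x => G.Adj x v) ⊆ G.neighborFinset v := by
      intro x hx
      have := (Finset.mem_filter.1 hx).2
      rw [SimpleGraph.mem_neighborFinset]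
      exact this.symm
    have h1 : ((Finset.univ.erase v).filter (fun x => G.Adj x v)).card ≤ G.degree v :=
      Finset.card_le_card hsub
    have h2 : G.degree v ≤ d - 1 := by omega
    push_cast
    omega
  have hins := wdrem_insert hmap v (by simp) hcount
  rw [Finset.insert_erase (Finset.mem_univ v)] at hins
  have hwdeg : G.WeaklyDeg fun _ => ((d - 1 : ℕ) : ℤ) := by
    have : ((d - 1 : ℕ) : ℤ) = (d : ℤ) - 1 := by push_cast [hd]; ring
    rw [show (fun _ => ((d - 1 : ℕ) : ℤ)) = (fun (_ : V) => (d : ℤ) - 1) from funext fun _ => this]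
    exact hins
  have : G.wdeg ≤ d - 1 := Nat.sInf_le hwdeg
  omega
end
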